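/- For a monic polynomial P of degree d ≥ 2, the filled-in Julia set K(P) is nonempty, compact, and its complement ℂ \ K(P) is connected. -/

import Mathlib

open Polynomial

/-- The filled-in Julia set of a polynomial: points with bounded forward orbit. -/
def filledJulia (P : Polynomial ℂ) : Set ℂ :=
  {z : ℂ | Bornology.IsBounded (Set.range fun k => (fun w => P.eval w)^[k] z)}

/-- A monic polynomial of degree ≥ 2 grows fast outside a suitable radius. -/
lemma juliaAux_exists_escape_radius (P : Polynomial ℂ) (hP : P.Monic) (hd : 2 ≤ P.natDegree) :
    ∃ R : ℝ, 1 ≤ R ∧ ∀ z : ℂ, R ≤ ‖z‖ → 2 * ‖z‖ ≤ ‖P.eval z‖ := by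
  set d := P.natDegree with hdd
  set C : ℝ := ∑ i ∈ Finset.range d, ‖P.coeff i‖ with hCdef
  have hC0 : (0:ℝ) ≤ C := Finset.sum_nonneg fun i _ => norm_nonneg _
  refine ⟨C + 4, by linarith, fun z hz => ?_⟩
  have hz1 : (1:ℝ) ≤ ‖z‖ := by linarith
  have hz0 : (0:ℝ) ≤ ‖z‖ := by linarith
  have heval : P.eval z = (∑ i ∈ Finset.range d, P.coeff i * z ^ i) + z ^ d := by
    conv_lhs => rw [Polynomial.eval_eq_sum_range]
    rw [Finset.sum_range_succ, hP.coeff_natDegree, one_mul]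
  have hS : ‖∑ i ∈ Finset.range d, P.coeff i * z ^ i‖ ≤ C * ‖z‖ ^ (d - 1) := by
    calc ‖∑ i ∈ Finset.range d, P.coeff i * z ^ i‖
        ≤ ∑ i ∈ Finset.range d, ‖P.coeff i * z ^ i‖ := norm_sum_le _ _
      _ ≤ ∑ i ∈ Finset.range d, ‖P.coeff i‖ * ‖z‖ ^ (d - 1) := by
          refine Finset.sum_le_sum fun i hi => ?_
          rw [norm_mul, norm_pow]
          refine mul_le_mul_of_nonneg_left ?_ (norm_nonneg _)
          exact pow_le_pow_right₀ hz1 (by have := Finset.mem_range.mp hi; omega)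
      _ = C * ‖z‖ ^ (d - 1) := by rw [← Finset.sum_mul]
  have hzd : ‖z‖ ^ d = ‖z‖ ^ (d - 1) * ‖z‖ := by
    have h1 : d - 1 + 1 = d := by omega
    rw [← h1, pow_succ]
    simp [h1]
  have hlow : ‖z‖ ^ d - C * ‖z‖ ^ (d - 1) ≤ ‖P.eval z‖ := by
    have h1 : ‖z‖ ^ d = ‖(z:ℂ) ^ d‖ := by rw [norm_pow]
    have h2 : (z:ℂ) ^ d = P.eval z - ∑ i ∈ Finset.range d, P.coeff i * z ^ i := by
      rw [heval]; ring
    have h3 : ‖(z:ℂ) ^ d‖ ≤ ‖P.eval z‖ + ‖∑ i ∈ Finset.range d, P.coeff i * z ^ i‖ := by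
      rw [h2]; exact norm_sub_le _ _
    linarith [h1 ▸ h3]
  have ht : ‖z‖ ≤ ‖z‖ ^ (d - 1) := by
    calc ‖z‖ = ‖z‖ ^ 1 := (pow_one _).symm
      _ ≤ ‖z‖ ^ (d - 1) := pow_le_pow_right₀ hz1 (by omega)
  have ht0 : 0 ≤ ‖z‖ ^ (d - 1) := by positivity
  nlinarith [mul_le_mul_of_nonneg_left (show (4:ℝ) ≤ ‖z‖ - C by linarith) ht0]

/-- A point outside the escape radius escapes geometrically. -/
lemma juliaAux_escape (P : Polynomial ℂ) {R : ℝ}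
    (hR : ∀ z : ℂ, R ≤ ‖z‖ → 2 * ‖z‖ ≤ ‖P.eval z‖) {z : ℂ} (hz : R ≤ ‖z‖) (hR0 : 0 ≤ R) :
    ∀ k : ℕ, 2 ^ k * ‖z‖ ≤ ‖(fun w => P.eval w)^[k] z‖ := by
  intro k
  induction k with
  | zero => simp
  | succ k ih =>
    have hk1 : (1:ℝ) ≤ 2 ^ k := one_le_pow₀ (by norm_num)
    have hw : R ≤ ‖(fun w => P.eval w)^[k] z‖ := by nlinarith
    rw [Function.iterate_succ_apply']
    have := hR _ hw
    calc 2 ^ (k+1) * ‖z‖ = 2 * (2 ^ k * ‖z‖) := by ring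
      _ ≤ 2 * ‖(fun w => P.eval w)^[k] z‖ := by linarith
      _ ≤ _ := this

/-- Characterization of the filled Julia set in terms of the escape radius. -/
lemma juliaAux_eq_iInter (P : Polynomial ℂ) {R : ℝ} (hR1 : 1 ≤ R)
    (hR : ∀ z : ℂ, R ≤ ‖z‖ → 2 * ‖z‖ ≤ ‖P.eval z‖) :
    filledJulia P = ⋂ k : ℕ, (fun w => P.eval w)^[k] ⁻¹' Metric.closedBall 0 R := by
  have hR0 : (0:ℝ) ≤ R := by linarith
  ext z
  simp only [Set.mem_iInter, Set.mem_preimage, Metric.mem_closedBall, dist_zero_right]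
  constructor
  · intro hz k
    by_contra hgt
    push_neg at hgt
    have hz' : Bornology.IsBounded (Set.range fun k => (fun w => P.eval w)^[k] z) := hz
    obtain ⟨M, hM⟩ := isBounded_iff_forall_norm_le.mp hz'
    obtain ⟨j, hj⟩ := pow_unbounded_of_one_lt (R := ℝ) M (by norm_num : (1:ℝ) < 2)
    have h1 : 2 ^ j * ‖(fun w => P.eval w)^[k] z‖ ≤
        ‖(fun w => P.eval w)^[j] ((fun w => P.eval w)^[k] z)‖ :=
      juliaAux_escape P hR hgt.le hR0 j
    have h2 : (fun w => P.eval w)^[j] ((fun w => P.eval w)^[k] z)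
        = (fun w => P.eval w)^[j + k] z := (Function.iterate_add_apply _ j k z).symm
    have h3 : ‖(fun w => P.eval w)^[j + k] z‖ ≤ M := hM _ ⟨j + k, rfl⟩
    have h4 : (1:ℝ) ≤ 2 ^ j := one_le_pow₀ (by norm_num)
    rw [h2] at h1
    nlinarith [mul_le_mul_of_nonneg_left (show (1:ℝ) ≤ ‖(fun w => P.eval w)^[k] z‖ by linarith)
      (show (0:ℝ) ≤ 2 ^ j by positivity)]
  · intro h
    refine (Metric.isBounded_closedBall (x := (0:ℂ)) (r := R)).subset ?_
    rintro w ⟨k, rfl⟩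
    simpa [dist_zero_right] using h k

theorem stmt2 (P : Polynomial ℂ) (hP : P.Monic) (hd : 2 ≤ P.natDegree) :
    (filledJulia P).Nonempty ∧ IsCompact (filledJulia P) ∧
      IsConnected (filledJulia P)ᶜ := by
  obtain ⟨R, hR1, hR⟩ := juliaAux_exists_escape_radius P hP hd
  have hR0 : (0:ℝ) ≤ R := by linarith
  have key := juliaAux_eq_iInter P hR1 hR
  have hPC : Continuous fun w : ℂ => P.eval w := P.continuous
  have hPD : Differentiable ℂ fun w : ℂ => P.eval w := P.differentiable
  -- Compactness
  have hclosed : IsClosed (filledJulia P) := by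
    rw [key]
    exact isClosed_iInter fun k =>
      (Metric.isClosed_closedBall (x := (0:ℂ)) (ε := R)).preimage (hPC.iterate k)
  have hbdd : filledJulia P ⊆ Metric.closedBall 0 R := by
    rw [key]
    intro z hz
    simpa using Set.mem_iInter.mp hz 0
  have hcompact : IsCompact (filledJulia P) := by
    refine Metric.isCompact_of_isClosed_isBounded hclosed ?_
    exact (Metric.isBounded_closedBall).subset hbdd
  -- Nonemptiness: a fixed point
  have hne : (filledJulia P).Nonempty := by
    have hdeg : 0 < (P - X).degree := by
      have hdX : (X : ℂ[X]).degree < P.degree := by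
        rw [Polynomial.degree_X, Polynomial.degree_eq_natDegree hP.ne_zero]
        exact_mod_cast lt_of_lt_of_le one_lt_two (by exact_mod_cast hd)
      rw [Polynomial.degree_sub_eq_left_of_degree_lt hdX,
        Polynomial.degree_eq_natDegree hP.ne_zero]
      exact_mod_cast lt_of_lt_of_le two_pos hd
    obtain ⟨z, hz⟩ := Complex.exists_root hdeg
    have hfix : P.eval z = z := by
      have h := hz
      simp only [Polynomial.IsRoot, Polynomial.eval_sub, Polynomial.eval_X] at h
      exact sub_eq_zero.mp h
    refine ⟨z, ?_⟩
    have : Set.range (fun k => (fun w => P.eval w)^[k] z) ⊆ {z} := by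
      rintro w ⟨k, rfl⟩
      have h5 : (fun w => P.eval w)^[k] z = z :=
        Function.iterate_fixed (f := fun w => P.eval w) hfix k
      simp [h5]
    exact (Bornology.isBounded_singleton).subset this
  refine ⟨hne, hcompact, ?_⟩
  -- Connectedness of the complement
  set A : Set ℂ := (filledJulia P)ᶜ with hA
  have hAopen : IsOpen A := hclosed.isOpen_compl
  set V : Set ℂ := {z : ℂ | R < ‖z‖} with hV
  have hVA : V ⊆ A := by
    intro z hz
    intro hzK
    exact absurd (hbdd hzK) (by simpa [dist_zero_right] using not_le.mpr hz)
  -- V is connected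
  have hVconn : IsConnected V := by
    have hrank : (1 : Cardinal) < Module.rank ℝ ℂ := by
      rw [Complex.rank_real_complex]; norm_num
    have hsph : IsConnected (Metric.sphere (0:ℂ) 1) := isConnected_sphere hrank 0 zero_le_one
    have hIoi : IsConnected (Set.Ioi R) := isConnected_Ioi
    have hprod : IsConnected ((Set.Ioi R) ×ˢ (Metric.sphere (0:ℂ) 1)) := hIoi.prod hsph
    have hcont : Continuous fun p : ℝ × ℂ => p.1 • p.2 := continuous_fst.smul continuous_snd
    have himg : (fun p : ℝ × ℂ => p.1 • p.2) '' ((Set.Ioi R) ×ˢ (Metric.sphere (0:ℂ) 1)) = V := by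
      ext w
      constructor
      · rintro ⟨⟨t, c⟩, ⟨ht, hc⟩, rfl⟩
        have ht' : R < t := ht
        have hc' : ‖c‖ = 1 := by simpa using hc
        simp only [hV, Set.mem_setOf_eq, norm_smul, hc', mul_one, Real.norm_eq_abs]
        rwa [abs_of_pos (lt_of_le_of_lt hR0 ht')]
      · intro hw
        have hw' : R < ‖w‖ := hw
        have hw0 : w ≠ 0 := by
          intro h; rw [h] at hw'; simp at hw'; linarith
        refine ⟨(‖w‖, ‖w‖⁻¹ • w), ⟨hw', ?_⟩, ?_⟩
        · simp only [Metric.mem_sphere, dist_zero_right, norm_smul, norm_inv, norm_norm]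
          rw [inv_mul_cancel₀ (norm_ne_zero_iff.mpr hw0)]
        · simp only [smul_smul]
          rw [mul_inv_cancel₀ (norm_ne_zero_iff.mpr hw0), one_smul]
    rw [← himg]
    exact hprod.image _ hcont.continuousOn
  -- every connected component of A meets V
  have key2 : ∀ z ∈ A, (connectedComponentIn A z ∩ V).Nonempty := by
    intro z hz
    by_contra hempty
    rw [Set.not_nonempty_iff_eq_empty] at hempty
    set C := connectedComponentIn A z with hC
    have hCA : C ⊆ A := connectedComponentIn_subset A z
    have hCopen : IsOpen C := hAopen.connectedComponentIn
    have hCball : C ⊆ Metric.closedBall 0 R := by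
      intro w hw
      have : w ∉ V := fun hv => Set.eq_empty_iff_forall_notMem.mp hempty w ⟨hw, hv⟩
      simpa [dist_zero_right] using not_lt.mp this
    have hCbdd : Bornology.IsBounded C := Metric.isBounded_closedBall.subset hCball
    -- frontier of C lies in the filled Julia set
    have hfr : frontier C ⊆ filledJulia P := by
      intro w hw
      by_contra hwK
      have hwA : w ∈ A := hwK
      have hwcl : w ∈ closure C := hw.1
      have hwnC : w ∉ C := by
        rw [hCopen.frontier_eq] at hw
        exact hw.2
      set C' := connectedComponentIn A w with hC'
      have hC'open : IsOpen C' := hAopen.connectedComponentIn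
      have hwC' : w ∈ C' := mem_connectedComponentIn hwA
      obtain ⟨p, hpC', hpC⟩ := mem_closure_iff.mp hwcl C' hC'open hwC'
      have : C' = C := by
        rw [hC', connectedComponentIn_eq hpC', hC, connectedComponentIn_eq hpC]
      exact hwnC (this ▸ hwC')
    -- maximum modulus principle
    have hzK : z ∈ filledJulia P := by
      rw [key]
      refine Set.mem_iInter.mpr fun k => ?_
      simp only [Set.mem_preimage, Metric.mem_closedBall, dist_zero_right]
      refine Complex.norm_le_of_forall_mem_frontier_norm_le hCbdd
        ((hPD.iterate k).diffContOnCl) (fun w hw => ?_) (subset_closure (mem_connectedComponentIn hz))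
      have hwK : w ∈ filledJulia P := hfr hw
      rw [key] at hwK
      simpa [dist_zero_right] using Set.mem_iInter.mp hwK k
    exact hz hzK
  -- conclude
  have hx : ((R + 1 : ℝ) : ℂ) ∈ V := by
    simp only [hV, Set.mem_setOf_eq, Complex.norm_real, Real.norm_eq_abs]
    rw [abs_of_pos (by linarith)]
    linarith
  refine ⟨⟨_, hVA hx⟩, ?_⟩
  refine isPreconnected_of_forall ((R + 1 : ℝ) : ℂ) fun y hy => ?_
  obtain ⟨p, hpC, hpV⟩ := key2 y hy
  refine ⟨connectedComponentIn A y ∪ V, ?_, Or.inr hx, Or.inl (mem_connectedComponentIn hy), ?_⟩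
  · exact Set.union_subset (connectedComponentIn_subset A y) hVA
  · exact IsPreconnected.union p hpC hpV isPreconnected_connectedComponentIn hVconn.isPreconnected
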